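/- For qubit states with Bloch vectors ψ, φ on S², the spherical integral ∫_{{λ : φ·λ > 0}} (1/π)(ψ·λ) Θ(ψ·λ) dλ equals (1 + cos θ)/2 where θ is the angle between ψ and φ; equivalently it equals cos²(θ/2). -/

import Mathlib

open MeasureTheory Metric
open scoped RealInnerProductSpace

/-- The Heaviside step function: `Θ x = 1` for `x > 0` and `0` for `x ≤ 0`. -/
noncomputable def heaviside (x : ℝ) : ℝ := if 0 < x then 1 else 0

namespace KS


local notation "E3" => EuclideanSpace ℝ (Fin 3)

lemma measurable_heaviside : Measurable heaviside := by
  unfold heaviside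
  exact Measurable.ite measurableSet_Ioi measurable_const measurable_const

lemma heaviside_nonneg (t : ℝ) : 0 ≤ heaviside t := by
  unfold heaviside; split <;> norm_num

lemma heaviside_le_one (t : ℝ) : heaviside t ≤ 1 := by
  unfold heaviside; split <;> norm_num

lemma abs_heaviside_le_one (t : ℝ) : |heaviside t| ≤ 1 := by
  rw [abs_of_nonneg (heaviside_nonneg t)]; exact heaviside_le_one t

lemma heaviside_pos_mul {c : ℝ} (hc : 0 < c) (t : ℝ) :
    heaviside (c * t) = heaviside t := by
  unfold heaviside
  by_cases h : 0 < t
  · rw [if_pos h, if_pos (mul_pos hc h)]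
  · push_neg at h
    rw [if_neg (by push_neg; exact mul_nonpos_of_nonneg_of_nonpos hc.le h),
      if_neg (by push_neg; exact h)]

lemma mul_heaviside_add_neg (t : ℝ) :
    t * heaviside t + (-t) * heaviside (-t) = |t| := by
  unfold heaviside
  rcases lt_trichotomy t 0 with h | h | h
  · rw [if_neg (by linarith), if_pos (by linarith), abs_of_neg h]; ring
  · simp [h]
  · rw [if_pos h, if_neg (by linarith), abs_of_pos h]; ring

lemma mul_heaviside_eq (t : ℝ) : t * heaviside t = (t + |t|) / 2 := by
  unfold heaviside
  rcases lt_trichotomy t 0 with h | h | h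
  · rw [if_neg (by linarith), abs_of_neg h]; ring
  · simp [h]
  · rw [if_pos h, abs_of_pos h]; ring

noncomputable def bI (x : E3) : ℝ := if ‖x‖ < 1 then 1 else 0

lemma bI_eq_indicator (f : E3 → ℝ) :
    (fun x => f x * bI x) = Set.indicator (ball (0 : E3) 1) f := by
  funext x
  by_cases h : x ∈ ball (0 : E3) 1
  · simp [bI, Set.indicator_of_mem h, mem_ball_zero_iff.mp h]
  · have h' : ¬ ‖x‖ < 1 := by simpa [mem_ball_zero_iff] using h
    simp [bI, h', Set.indicator_of_notMem h]

lemma bI_neg (x : E3) : bI (-x) = bI x := by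
  unfold bI; rw [norm_neg]

lemma integrable_mul_bI {f : E3 → ℝ} (hf : Measurable f) {M : ℝ}
    (hM : ∀ x ∈ ball (0 : E3) 1, |f x| ≤ M) :
    Integrable (fun x => f x * bI x) := by
  rw [bI_eq_indicator, integrable_indicator_iff measurableSet_ball]
  exact Measure.integrableOn_of_bounded measure_ball_lt_top.ne hf.aestronglyMeasurable
    ((ae_restrict_iff' measurableSet_ball).2 (Filter.Eventually.of_forall fun x hx => by
      simpa [Real.norm_eq_abs] using hM x hx))

lemma integral_comp_li (e : E3 ≃ₗᵢ[ℝ] E3) (f : E3 → ℝ) :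
    ∫ x, f (e x) = ∫ x, f x :=
  e.measurePreserving.integral_comp e.toHomeomorph.measurableEmbedding f




lemma radial_integral :
    (∫ r : Set.Ioi (0:ℝ), (if (r:ℝ) < 1 then (r:ℝ) else 0) ∂(Measure.volumeIoiPow 2))
      = 1 / 4 := by
  rw [Measure.volumeIoiPow]
  simp only [ENNReal.ofReal]
  rw [integral_withDensity_eq_integral_smul
      ((measurable_subtype_coe.pow_const 2).real_toNNReal) _,
    integral_subtype_comap measurableSet_Ioi
      (fun a : ℝ => Real.toNNReal (a ^ 2) • (if a < 1 then a else 0))]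
  have h : Set.EqOn (fun x : ℝ => Real.toNNReal (x ^ 2) • (if x < 1 then x else 0))
      (Set.indicator (Set.Iio 1) fun t : ℝ => t ^ 3) (Set.Ioi 0) := by
    intro x hx
    have hx0 : (0:ℝ) ≤ x := le_of_lt hx
    by_cases h1 : x < 1
    · simp only [Set.indicator_of_mem (Set.mem_Iio.mpr h1), if_pos h1, NNReal.smul_def,
        Real.coe_toNNReal _ (pow_nonneg hx0 2), smul_eq_mul]
      ring
    · simp [Set.indicator_of_notMem (by simpa using h1 : x ∉ Set.Iio 1), if_neg h1]
  rw [setIntegral_congr_fun measurableSet_Ioi h, integral_indicator measurableSet_Iio,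
    Measure.restrict_restrict measurableSet_Iio, Set.Iio_inter_Ioi,
    ← integral_Ioc_eq_integral_Ioo, ← intervalIntegral.integral_of_le (zero_le_one),
    integral_pow]
  norm_num

lemma sphere_integral_eq (g : sphere (0:E3) 1 → ℝ) (G : E3 → ℝ)
    (hG : ∀ x : ({(0:E3)}ᶜ : Set E3),
      G x = g ((homeomorphUnitSphereProd E3 x).1) *
        (if ‖(x:E3)‖ < 1 then ‖(x:E3)‖ else 0)) :
    ∫ l, g l ∂(volume : Measure E3).toSphere = 4 * ∫ x, G x := by
  have hdim : Module.finrank ℝ E3 - 1 = 2 := by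
    rw [finrank_euclideanSpace_fin]
  set F : sphere (0:E3) 1 × Set.Ioi (0:ℝ) → ℝ :=
    fun p => g p.1 * (if (p.2:ℝ) < 1 then (p.2:ℝ) else 0) with hF
  have h1 : ∫ x, G x ∂(volume : Measure E3)
      = ∫ x : ({(0:E3)}ᶜ : Set E3), G x ∂(Measure.comap Subtype.val volume) := by
    rw [integral_subtype_comap (measurableSet_singleton (0:E3)).compl G,
      MeasureTheory.restrict_compl_singleton]
  have h2 : ∫ x : ({(0:E3)}ᶜ : Set E3), G x ∂(Measure.comap Subtype.val volume)
      = ∫ p, F p ∂((volume : Measure E3).toSphere.prod (Measure.volumeIoiPow 2)) := by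
    rw [← hdim]
    rw [← (volume : Measure E3).measurePreserving_homeomorphUnitSphereProd.integral_comp
      (Homeomorph.measurableEmbedding _) F]
    refine integral_congr_ae (Filter.Eventually.of_forall fun x => ?_)
    show G ↑x = F ((homeomorphUnitSphereProd E3) x)
    rw [hG x]
    simp [hF]
  have h3 : ∫ p, F p ∂((volume : Measure E3).toSphere.prod (Measure.volumeIoiPow 2))
      = (∫ l, g l ∂(volume : Measure E3).toSphere) *
        (∫ r : Set.Ioi (0:ℝ), (if (r:ℝ) < 1 then (r:ℝ) else 0) ∂(Measure.volumeIoiPow 2)) := by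
    simp only [hF]
    exact integral_prod_mul (fun l => g l)
      (fun r : Set.Ioi (0:ℝ) => if (r:ℝ) < 1 then (r:ℝ) else 0)
  rw [h3, radial_integral] at h2
  rw [h1] at *
  rw [h2]
  ring




lemma volume_sumsq_lt (c : ℝ) :
    volume {y : Fin 2 → ℝ | ∑ i, y i ^ 2 < c} = ENNReal.ofReal (Real.pi * c) := by
  have hmeas : MeasurableSet {y : Fin 2 → ℝ | ∑ i, y i ^ 2 < c} :=
    measurableSet_lt (Finset.measurable_sum _ fun i _ => (measurable_pi_apply i).pow_const 2)
      measurable_const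
  rcases le_or_gt c 0 with hc | hc
  · have : {y : Fin 2 → ℝ | ∑ i, y i ^ 2 < c} = ∅ := by
      ext y
      simp only [Set.mem_setOf_eq, Set.mem_empty_iff_false, iff_false, not_lt]
      exact hc.trans (Finset.sum_nonneg fun i _ => sq_nonneg _)
    rw [this, measure_empty, eq_comm, ENNReal.ofReal_eq_zero]
    exact mul_nonpos_of_nonneg_of_nonpos Real.pi_nonneg hc
  · have hpre : (MeasurableEquiv.toLp 2 (Fin 2 → ℝ)).symm ⁻¹' {y : Fin 2 → ℝ | ∑ i, y i ^ 2 < c}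
        = ball (0 : EuclideanSpace ℝ (Fin 2)) (Real.sqrt c) := by
      ext x
      simp only [Set.mem_preimage, Set.mem_setOf_eq, mem_ball_zero_iff]
      have hx : (MeasurableEquiv.toLp 2 (Fin 2 → ℝ)).symm x = (x : Fin 2 → ℝ) := rfl
      rw [hx]
      have hnorm : ‖x‖ ^ 2 = ∑ i, x i ^ 2 := by
        rw [EuclideanSpace.norm_eq,
          Real.sq_sqrt (Finset.sum_nonneg fun i _ => sq_nonneg (‖x i‖))]
        simp [sq_abs]
      rw [← hnorm, ← Real.lt_sqrt (norm_nonneg x)]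
    rw [← (EuclideanSpace.volume_preserving_symm_measurableEquiv_toLp (Fin 2)).measure_preimage
      hmeas.nullMeasurableSet, hpre, EuclideanSpace.volume_ball]
    rw [Fintype.card_fin]
    have hg : Real.Gamma (((2:ℕ):ℝ) / 2 + 1) = 1 := by
      rw [show (((2:ℕ):ℝ)/2 + 1) = 2 by norm_num, Real.Gamma_two]
    rw [hg, Real.sq_sqrt Real.pi_nonneg]
    rw [← ENNReal.ofReal_pow (Real.sqrt_nonneg c), Real.sq_sqrt hc.le,
      ← ENNReal.ofReal_mul hc.le]
    rw [mul_comm c, div_one]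



lemma outer_integral :
    ∫ t : ℝ, |t| * (ENNReal.ofReal (Real.pi * (1 - t ^ 2))).toReal = Real.pi / 2 := by
  have hind : (fun t : ℝ => |t| * (ENNReal.ofReal (Real.pi * (1 - t ^ 2))).toReal)
      = Set.indicator (Set.Ioo (-1 : ℝ) 1) (fun t => Real.pi * (|t| * (1 - t ^ 2))) := by
    funext t
    by_cases h : t ∈ Set.Ioo (-1:ℝ) 1
    · have h1 : (0:ℝ) ≤ 1 - t ^ 2 := by nlinarith [h.1, h.2]
      rw [Set.indicator_of_mem h, ENNReal.toReal_ofReal (by positivity)]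
      ring
    · have h1 : 1 - t ^ 2 ≤ 0 := by
        simp only [Set.mem_Ioo, not_and_or, not_lt] at h
        rcases h with h | h <;> nlinarith
      rw [Set.indicator_of_notMem h, ENNReal.ofReal_eq_zero.mpr
        (mul_nonpos_of_nonneg_of_nonpos Real.pi_nonneg h1)]
      simp
  rw [hind, integral_indicator measurableSet_Ioo, ← integral_Ioc_eq_integral_Ioo,
    ← intervalIntegral.integral_of_le (by norm_num : (-1:ℝ) ≤ 1)]
  have hc : Continuous fun t : ℝ => Real.pi * (|t| * (1 - t ^ 2)) := by continuity
  rw [← intervalIntegral.integral_add_adjacent_intervals (a := (-1:ℝ)) (b := 0) (c := 1)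
    (hc.intervalIntegrable _ _) (hc.intervalIntegrable _ _)]
  have hval : (∫ t in (0:ℝ)..1, Real.pi * (|t| * (1 - t ^ 2))) = Real.pi / 4 := by
    rw [intervalIntegral.integral_congr (g := fun t : ℝ => Real.pi * t - Real.pi * t ^ 3)
      (fun t ht => ?_)]
    · rw [intervalIntegral.integral_sub
        (Continuous.intervalIntegrable (by continuity) _ _)
        (Continuous.intervalIntegrable (by continuity) _ _),
        intervalIntegral.integral_const_mul, intervalIntegral.integral_const_mul,
        integral_id, integral_pow]
      norm_num
      ring
    · rw [Set.uIcc_of_le zero_le_one] at ht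
      rw [abs_of_nonneg ht.1]
      ring
  have hneg : (∫ t in (-1:ℝ)..0, Real.pi * (|t| * (1 - t ^ 2)))
      = ∫ t in (0:ℝ)..1, Real.pi * (|t| * (1 - t ^ 2)) := by
    have h2 := intervalIntegral.integral_comp_neg (a := (0:ℝ)) (b := 1)
      (fun t => Real.pi * (|t| * (1 - t ^ 2)))
    simp only [neg_zero, abs_neg, neg_sq] at h2
    rw [← h2]
  rw [hneg, hval]
  ring






lemma norm_lt_one_iff (x : E3) : ‖x‖ < 1 ↔ ∑ i, x i ^ 2 < 1 := by
  have hnorm : ‖x‖ ^ 2 = ∑ i, x i ^ 2 := by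
    rw [EuclideanSpace.norm_eq,
      Real.sq_sqrt (Finset.sum_nonneg fun i _ => sq_nonneg (‖x i‖))]
    simp [sq_abs]
  rw [← hnorm]
  constructor
  · intro h
    nlinarith [norm_nonneg x]
  · intro h
    nlinarith [norm_nonneg x]

lemma integral_abs_coord :
    ∫ x : E3, |x 0| * (if ‖x‖ < 1 then (1:ℝ) else 0) = Real.pi / 2 := by
  set F2 : ℝ × (Fin 2 → ℝ) → ℝ :=
    fun p => |p.1| * (if p.1 ^ 2 + ∑ i, p.2 i ^ 2 < 1 then 1 else 0) with hF2
  set e₁ : E3 ≃ᵐ (Fin 3 → ℝ) := (MeasurableEquiv.toLp 2 (Fin 3 → ℝ)).symm with he₁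
  set e₂ : (Fin 3 → ℝ) ≃ᵐ ℝ × (Fin 2 → ℝ) :=
    MeasurableEquiv.piFinSuccAbove (fun _ : Fin 3 => ℝ) 0 with he₂
  have mp₁ : MeasurePreserving e₁ volume volume :=
    EuclideanSpace.volume_preserving_symm_measurableEquiv_toLp (Fin 3)
  have mp₂ : MeasurePreserving e₂ volume volume :=
    volume_preserving_piFinSuccAbove (fun _ : Fin 3 => ℝ) 0
  have hfun : ∀ x : E3, |x 0| * (if ‖x‖ < 1 then (1:ℝ) else 0) = F2 (e₂ (e₁ x)) := by
    intro x
    have h1 : e₁ x = (x : Fin 3 → ℝ) := rfl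
    have h2 : e₂ (e₁ x) = (x 0, fun j : Fin 2 => x j.succ) := by
      rw [h1]
      ext j
      · rfl
      · show (x : Fin 3 → ℝ) ((0 : Fin 3).succAbove j) = x j.succ
        rw [Fin.zero_succAbove]
    rw [h2, hF2]
    have hiff : ‖x‖ < 1 ↔ x 0 ^ 2 + ∑ j : Fin 2, x j.succ ^ 2 < 1 := by
      rw [norm_lt_one_iff x, Fin.sum_univ_succ (f := fun i => x i ^ 2)]
    exact congrArg (|x 0| * ·) (if_congr hiff rfl rfl)
  have h931 : (fun x : E3 => |x 0| * (if ‖x‖ < 1 then (1:ℝ) else 0))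
      = fun x => F2 (e₂ (e₁ x)) := funext hfun
  have hInt : Integrable (fun x : E3 => |x 0| * (if ‖x‖ < 1 then (1:ℝ) else 0)) := by
    have : (fun x : E3 => |x 0| * (if ‖x‖ < 1 then (1:ℝ) else 0))
        = Set.indicator (ball (0 : E3) 1) (fun x => |x 0|) := by
      funext x
      by_cases h : x ∈ ball (0 : E3) 1
      · simp [Set.indicator_of_mem h, mem_ball_zero_iff.mp h]
      · have h' : ¬ ‖x‖ < 1 := by simpa [mem_ball_zero_iff] using h
        simp [h', Set.indicator_of_notMem h]
    rw [this, integrable_indicator_iff measurableSet_ball]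
    refine Measure.integrableOn_of_bounded (M := 1) measure_ball_lt_top.ne ?_ ?_
    · exact ((measurable_pi_apply 0).comp e₁.measurable).abs.aestronglyMeasurable
    · refine (ae_restrict_iff' measurableSet_ball).2 (Filter.Eventually.of_forall fun x hx => ?_)
      have h1 : |x 0| ≤ ‖x‖ := by
        have h := abs_real_inner_le_norm (EuclideanSpace.single (0 : Fin 3) (1:ℝ)) x
        simpa [EuclideanSpace.inner_single_left, EuclideanSpace.norm_single] using h
      have h2 : ‖x‖ < 1 := mem_ball_zero_iff.mp hx
      rw [Real.norm_eq_abs, abs_abs]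
      linarith
  have hIntF2 : Integrable F2 (volume : Measure (ℝ × (Fin 2 → ℝ))) := by
    have mp := mp₂.comp mp₁
    have emb := e₂.measurableEmbedding.comp e₁.measurableEmbedding
    refine (mp.integrable_comp_emb emb).mp ?_
    show Integrable (fun x => F2 (e₂ (e₁ x))) volume
    rw [← h931]
    exact hInt
  have hinner : ∀ t : ℝ, (∫ y : Fin 2 → ℝ, F2 (t, y))
      = |t| * (ENNReal.ofReal (Real.pi * (1 - t ^ 2))).toReal := by
    intro t
    have hSt : MeasurableSet {y : Fin 2 → ℝ | ∑ i, y i ^ 2 < 1 - t ^ 2} :=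
      measurableSet_lt (Finset.measurable_sum _ fun i _ => (measurable_pi_apply i).pow_const 2)
        measurable_const
    have hrw : (fun y : Fin 2 → ℝ => F2 (t, y))
        = fun y => |t| * Set.indicator {y : Fin 2 → ℝ | ∑ i, y i ^ 2 < 1 - t ^ 2}
            (fun _ => (1:ℝ)) y := by
      funext y
      show |t| * (if t ^ 2 + ∑ i, y i ^ 2 < 1 then (1:ℝ) else 0)
        = |t| * Set.indicator {y : Fin 2 → ℝ | ∑ i, y i ^ 2 < 1 - t ^ 2} (fun _ => (1:ℝ)) y
      congr 1
      by_cases h : y ∈ {y : Fin 2 → ℝ | ∑ i, y i ^ 2 < 1 - t ^ 2}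
      · have h' : (∑ i, y i ^ 2) < 1 - t ^ 2 := h
        rw [Set.indicator_of_mem h, if_pos (by linarith)]
      · have h' : ¬ (∑ i, y i ^ 2) < 1 - t ^ 2 := h
        rw [Set.indicator_of_notMem h, if_neg (by intro hh; exact h' (by linarith))]
    rw [hrw, integral_const_mul, integral_indicator_const (1:ℝ) hSt,
      measureReal_def, volume_sumsq_lt, smul_eq_mul, mul_one]
  calc ∫ x : E3, |x 0| * (if ‖x‖ < 1 then (1:ℝ) else 0)
      = ∫ x : E3, F2 (e₂ (e₁ x)) := by rw [h931]
    _ = ∫ y : Fin 3 → ℝ, F2 (e₂ y) :=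
        mp₁.integral_comp e₁.measurableEmbedding (fun y => F2 (e₂ y))
    _ = ∫ p, F2 p ∂(volume : Measure (ℝ × (Fin 2 → ℝ))) :=
        mp₂.integral_comp e₂.measurableEmbedding F2
    _ = ∫ t : ℝ, ∫ y : Fin 2 → ℝ, F2 (t, y) := by
        rw [MeasureTheory.Measure.volume_eq_prod] at hIntF2 ⊢
        exact integral_prod F2 hIntF2
    _ = ∫ t : ℝ, |t| * (ENNReal.ofReal (Real.pi * (1 - t ^ 2))).toReal := by
        exact integral_congr_ae (Filter.Eventually.of_forall fun t => hinner t)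
    _ = Real.pi / 2 := outer_integral


lemma integral_abs_coord_bI : ∫ x : E3, |x 0| * bI x = Real.pi / 2 := by
  unfold bI
  exact integral_abs_coord

lemma inner_cont (v : E3) : Continuous fun x : E3 => ⟪v, x⟫ :=
  continuous_const.inner continuous_id

lemma abs_inner_le_on_ball (v : E3) (hv : ‖v‖ = 1) :
    ∀ x ∈ ball (0 : E3) 1, |⟪v, x⟫| ≤ 1 := by
  intro x hx
  have h := abs_real_inner_le_norm v x
  have h2 : ‖x‖ < 1 := mem_ball_zero_iff.mp hx
  rw [hv, one_mul] at h
  linarith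

lemma integral_abs_inner_bI (v : E3) (hv : ‖v‖ = 1) :
    ∫ x, |⟪v, x⟫| * bI x = Real.pi / 2 := by
  set e0 : E3 := EuclideanSpace.single (0 : Fin 3) (1:ℝ) with he0
  have hnorm : ‖v‖ = ‖e0‖ := by
    rw [hv, he0, EuclideanSpace.norm_single, norm_one]
  set e := Submodule.reflection (ℝ ∙ (v - e0))ᗮ with he
  have hev : e v = e0 := Submodule.reflection_sub hnorm
  have hveq : e e0 = v := by rw [← hev]; exact Submodule.reflection_reflection _ v
  have h := integral_comp_li e (fun x => |⟪v, x⟫| * bI x)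
  rw [← h]
  have hpt : ∀ x : E3, |⟪v, e x⟫| * bI (e x) = |x 0| * bI x := by
    intro x
    have h1 : ⟪v, e x⟫ = ⟪e0, x⟫ := by
      conv_lhs => rw [← hveq]
      exact e.inner_map_map e0 x
    have h2 : bI (e x) = bI x := by unfold bI; rw [e.norm_map]
    rw [h1, h2, he0, EuclideanSpace.inner_single_left]
    norm_num
  rw [integral_congr_ae (Filter.Eventually.of_forall hpt)]
  exact integral_abs_coord_bI

lemma integral_inner_heaviside_self_bI (v : E3) (hv : ‖v‖ = 1) :
    ∫ x, (⟪v, x⟫ * heaviside ⟪v, x⟫) * bI x = Real.pi / 4 := by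
  have hmeas : Measurable fun x : E3 => ⟪v, x⟫ := (inner_cont v).measurable
  have hb : ∀ x ∈ ball (0 : E3) 1, |⟪v, x⟫ * heaviside ⟪v, x⟫| ≤ 1 := by
    intro x hx
    rw [abs_mul]
    exact mul_le_one₀ (abs_inner_le_on_ball v hv x hx) (abs_nonneg _)
      (abs_heaviside_le_one _)
  have hInt1 : Integrable fun x => (⟪v, x⟫ * heaviside ⟪v, x⟫) * bI x :=
    integrable_mul_bI (hmeas.mul (measurable_heaviside.comp hmeas)) hb
  have hb2 : ∀ x ∈ ball (0 : E3) 1, |(-⟪v, x⟫) * heaviside (-⟪v, x⟫)| ≤ 1 := by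
    intro x hx
    rw [abs_mul, abs_neg]
    exact mul_le_one₀ (abs_inner_le_on_ball v hv x hx) (abs_nonneg _)
      (abs_heaviside_le_one _)
  have hInt2 : Integrable fun x => ((-⟪v, x⟫) * heaviside (-⟪v, x⟫)) * bI x :=
    integrable_mul_bI (hmeas.neg.mul (measurable_heaviside.comp hmeas.neg)) hb2
  have hneg : (∫ x, ((-⟪v, x⟫) * heaviside (-⟪v, x⟫)) * bI x)
      = ∫ x, (⟪v, x⟫ * heaviside ⟪v, x⟫) * bI x := by
    have h := integral_comp_li (LinearIsometryEquiv.neg ℝ (E := E3))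
      (fun x => (⟪v, x⟫ * heaviside ⟪v, x⟫) * bI x)
    simp only [LinearIsometryEquiv.coe_neg] at h
    simp only [inner_neg_right, bI_neg] at h
    exact h
  have hsum : (∫ x, ((⟪v, x⟫ * heaviside ⟪v, x⟫) * bI x
      + ((-⟪v, x⟫) * heaviside (-⟪v, x⟫)) * bI x))
      = ∫ x, |⟪v, x⟫| * bI x := by
    refine integral_congr_ae (Filter.Eventually.of_forall fun x => ?_)
    show (⟪v, x⟫ * heaviside ⟪v, x⟫) * bI x
        + ((-⟪v, x⟫) * heaviside (-⟪v, x⟫)) * bI x = |⟪v, x⟫| * bI x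
    rw [← add_mul, mul_heaviside_add_neg]
  rw [integral_add hInt1 hInt2, hneg, integral_abs_inner_bI v hv] at hsum
  linarith

lemma null_hyperplane (v : E3) (hv : v ≠ 0) :
    volume {x : E3 | ⟪v, x⟫ = 0} = 0 := by
  set K : Submodule ℝ E3 := LinearMap.ker (innerSL ℝ v).toLinearMap with hK
  have hset : {x : E3 | ⟪v, x⟫ = 0} = (K : Set E3) := by
    ext x
    simp [hK, LinearMap.mem_ker]
  have hKne : K ≠ ⊤ := by
    intro h
    have hvK : v ∈ K := by rw [h]; exact Submodule.mem_top
    have : ⟪v, v⟫ = 0 := by simpa [hK, LinearMap.mem_ker] using hvK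
    exact hv (inner_self_eq_zero.mp this)
  rw [hset]
  exact Measure.addHaar_submodule (volume : Measure E3) K hKne

lemma integral_abs_inner_heaviside_bI (u v : E3) (hu : ‖u‖ = 1) (hv : ‖v‖ = 1) :
    ∫ x, (|⟪u, x⟫| * heaviside ⟪v, x⟫) * bI x = Real.pi / 4 := by
  have hmeasu : Measurable fun x : E3 => ⟪u, x⟫ := (inner_cont u).measurable
  have hmeasv : Measurable fun x : E3 => ⟪v, x⟫ := (inner_cont v).measurable
  have hb : ∀ x ∈ ball (0 : E3) 1, ∀ t : ℝ, |(|⟪u, x⟫| * heaviside t)| ≤ 1 := by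
    intro x hx t
    rw [abs_mul, abs_abs]
    exact mul_le_one₀ (abs_inner_le_on_ball u hu x hx) (abs_nonneg _)
      (abs_heaviside_le_one _)
  have hInt1 : Integrable fun x => (|⟪u, x⟫| * heaviside ⟪v, x⟫) * bI x :=
    integrable_mul_bI (hmeasu.abs.mul (measurable_heaviside.comp hmeasv))
      (fun x hx => hb x hx _)
  have hInt2 : Integrable fun x => (|⟪u, x⟫| * heaviside (-⟪v, x⟫)) * bI x :=
    integrable_mul_bI (hmeasu.abs.mul (measurable_heaviside.comp hmeasv.neg))
      (fun x hx => hb x hx _)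
  have hneg : (∫ x, (|⟪u, x⟫| * heaviside (-⟪v, x⟫)) * bI x)
      = ∫ x, (|⟪u, x⟫| * heaviside ⟪v, x⟫) * bI x := by
    have h := integral_comp_li (LinearIsometryEquiv.neg ℝ (E := E3))
      (fun x => (|⟪u, x⟫| * heaviside ⟪v, x⟫) * bI x)
    simp only [LinearIsometryEquiv.coe_neg] at h
    simp only [inner_neg_right, abs_neg, bI_neg] at h
    exact h
  have hvne : v ≠ 0 := by
    intro h
    rw [h, norm_zero] at hv
    norm_num at hv
  have hae : (fun x => (|⟪u, x⟫| * heaviside ⟪v, x⟫) * bI x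
      + (|⟪u, x⟫| * heaviside (-⟪v, x⟫)) * bI x)
      =ᵐ[volume] fun x => |⟪u, x⟫| * bI x := by
    have hsub : {x : E3 | ¬ ((|⟪u, x⟫| * heaviside ⟪v, x⟫) * bI x
        + (|⟪u, x⟫| * heaviside (-⟪v, x⟫)) * bI x = |⟪u, x⟫| * bI x)}
        ⊆ {x : E3 | ⟪v, x⟫ = 0} := by
      intro x hx
      by_contra hne
      apply hx
      have hΘ : heaviside ⟪v, x⟫ + heaviside (-⟪v, x⟫) = 1 := by
        unfold heaviside
        rcases lt_or_gt_of_ne hne with h | h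
        · rw [if_neg (by linarith), if_pos (by linarith)]; ring
        · rw [if_pos h, if_neg (by linarith)]; ring
      have : (|⟪u, x⟫| * heaviside ⟪v, x⟫) * bI x
          + (|⟪u, x⟫| * heaviside (-⟪v, x⟫)) * bI x
          = |⟪u, x⟫| * (heaviside ⟪v, x⟫ + heaviside (-⟪v, x⟫)) * bI x := by ring
      rw [this, hΘ, mul_one]
    exact measure_mono_null hsub (null_hyperplane v hvne)
  have hsum := integral_congr_ae hae
  rw [integral_add hInt1 hInt2, hneg, integral_abs_inner_bI u hu] at hsum
  linarith

lemma integral_inner_heaviside_bI (u v : E3) (hu : ‖u‖ = 1) (hv : ‖v‖ = 1) :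
    ∫ x, (⟪u, x⟫ * heaviside ⟪v, x⟫) * bI x = ⟪u, v⟫ * (Real.pi / 4) := by
  set c : ℝ := ⟪u, v⟫ with hc
  set w : E3 := u - c • v with hw
  have hmeasv : Measurable fun x : E3 => ⟪v, x⟫ := (inner_cont v).measurable
  have hmeasw : Measurable fun x : E3 => ⟪w, x⟫ := (inner_cont w).measurable
  have hwv : ⟪v, w⟫ = 0 := by
    rw [hw, inner_sub_right, real_inner_smul_right, real_inner_self_eq_norm_sq, hv,
      real_inner_comm, ← hc]
    ring
  have hdecomp : ∀ x : E3, ⟪u, x⟫ = c * ⟪v, x⟫ + ⟪w, x⟫ := by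
    intro x
    rw [hw, inner_sub_left, real_inner_smul_left]
    ring
  have hA2 : ∫ x, (⟪w, x⟫ * heaviside ⟪v, x⟫) * bI x = 0 := by
    set e := Submodule.reflection (ℝ ∙ v) with he
    have hev : e v = v :=
      Submodule.reflection_mem_subspace_eq_self (Submodule.mem_span_singleton_self v)
    have hew : e w = -w := Submodule.reflection_mem_subspace_orthogonalComplement_eq_neg
      (Submodule.mem_orthogonal_singleton_iff_inner_right.mpr hwv)
    have h := integral_comp_li e (fun x => (⟪w, x⟫ * heaviside ⟪v, x⟫) * bI x)
    have hpt : ∀ x : E3, (⟪w, e x⟫ * heaviside ⟪v, e x⟫) * bI (e x)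
        = -((⟪w, x⟫ * heaviside ⟪v, x⟫) * bI x) := by
      intro x
      have h1 : ⟪v, e x⟫ = ⟪v, x⟫ := by
        conv_lhs => rw [← hev]
        exact e.inner_map_map v x
      have h2 : ⟪w, e x⟫ = -⟪w, x⟫ := by
        have hw2 : e (-w) = w := by rw [map_neg, hew, neg_neg]
        conv_lhs => rw [← hw2]
        rw [e.inner_map_map, inner_neg_left]
      have h3 : bI (e x) = bI x := by unfold bI; rw [e.norm_map]
      rw [h1, h2, h3]
      ring
    rw [integral_congr_ae (Filter.Eventually.of_forall hpt), integral_neg] at h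
    linarith
  have hbw : ∀ x ∈ ball (0 : E3) 1, |⟪w, x⟫ * heaviside ⟪v, x⟫| ≤ ‖w‖ := by
    intro x hx
    rw [abs_mul]
    calc |⟪w, x⟫| * |heaviside ⟪v, x⟫| ≤ (‖w‖ * ‖x‖) * 1 :=
          mul_le_mul (abs_real_inner_le_norm w x) (abs_heaviside_le_one _)
            (abs_nonneg _) (by positivity)
      _ ≤ ‖w‖ := by
          have h2 : ‖x‖ < 1 := mem_ball_zero_iff.mp hx
          nlinarith [norm_nonneg w, norm_nonneg x]
  have hIntw : Integrable fun x => (⟪w, x⟫ * heaviside ⟪v, x⟫) * bI x :=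
    integrable_mul_bI (hmeasw.mul (measurable_heaviside.comp hmeasv)) hbw
  have hbv : ∀ x ∈ ball (0 : E3) 1, |c * (⟪v, x⟫ * heaviside ⟪v, x⟫)| ≤ |c| := by
    intro x hx
    rw [abs_mul, abs_mul]
    have := mul_le_one₀ (abs_inner_le_on_ball v hv x hx) (abs_nonneg _)
      (abs_heaviside_le_one ⟪v, x⟫)
    nlinarith [abs_nonneg c]
  have hIntv : Integrable fun x => (c * (⟪v, x⟫ * heaviside ⟪v, x⟫)) * bI x :=
    integrable_mul_bI ((hmeasv.mul (measurable_heaviside.comp hmeasv)).const_mul c) hbv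
  have hsplit : (∫ x, (⟪u, x⟫ * heaviside ⟪v, x⟫) * bI x)
      = ∫ x, ((c * (⟪v, x⟫ * heaviside ⟪v, x⟫)) * bI x
          + (⟪w, x⟫ * heaviside ⟪v, x⟫) * bI x) := by
    refine integral_congr_ae (Filter.Eventually.of_forall fun x => ?_)
    show (⟪u, x⟫ * heaviside ⟪v, x⟫) * bI x
        = (c * (⟪v, x⟫ * heaviside ⟪v, x⟫)) * bI x + (⟪w, x⟫ * heaviside ⟪v, x⟫) * bI x
    rw [hdecomp x]
    ring
  rw [hsplit, integral_add hIntv hIntw, hA2, add_zero]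
  have : (∫ x, (c * (⟪v, x⟫ * heaviside ⟪v, x⟫)) * bI x)
      = c * ∫ x, (⟪v, x⟫ * heaviside ⟪v, x⟫) * bI x := by
    rw [← integral_const_mul]
    refine integral_congr_ae (Filter.Eventually.of_forall fun x => ?_)
    show (c * (⟪v, x⟫ * heaviside ⟪v, x⟫)) * bI x
        = c * ((⟪v, x⟫ * heaviside ⟪v, x⟫) * bI x)
    ring
  rw [this, integral_inner_heaviside_self_bI v hv]

end KS

/-- For qubit states with Bloch vectors `ψ, φ` on `S²` at angle `θ ∈ [0, π]`
(`cos θ = ψ·φ`), the spherical integral `∫_{φ·λ > 0} (1/π)(ψ·λ) Θ(ψ·λ) dλ` equals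
`(1 + cos θ)/2`, which equals `cos²(θ/2) = |⟨φ|ψ⟩|²`. -/
theorem kochenSpecker_overlap_integral
    (ψ φ : sphere (0 : EuclideanSpace ℝ (Fin 3)) 1)
    (θ : ℝ) (hθ0 : 0 ≤ θ) (hθπ : θ ≤ Real.pi)
    (hcos : Real.cos θ = ⟪(ψ : EuclideanSpace ℝ (Fin 3)), (φ : EuclideanSpace ℝ (Fin 3))⟫) :
    (∫ l in {l : sphere (0 : EuclideanSpace ℝ (Fin 3)) 1 |
        0 < ⟪(φ : EuclideanSpace ℝ (Fin 3)), (l : EuclideanSpace ℝ (Fin 3))⟫},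
        (1 / Real.pi) * ⟪(ψ : EuclideanSpace ℝ (Fin 3)), (l : EuclideanSpace ℝ (Fin 3))⟫ *
          heaviside ⟪(ψ : EuclideanSpace ℝ (Fin 3)), (l : EuclideanSpace ℝ (Fin 3))⟫
        ∂((volume : Measure (EuclideanSpace ℝ (Fin 3))).toSphere)
      = (1 + Real.cos θ) / 2) ∧
    (1 + Real.cos θ) / 2 = Real.cos (θ / 2) ^ 2 := by
  constructor
  · have hψ : ‖(ψ : EuclideanSpace ℝ (Fin 3))‖ = 1 := by
      have := ψ.2; rwa [mem_sphere_zero_iff_norm] at this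
    have hφ : ‖(φ : EuclideanSpace ℝ (Fin 3))‖ = 1 := by
      have := φ.2; rwa [mem_sphere_zero_iff_norm] at this
    have hS : MeasurableSet {l : sphere (0 : EuclideanSpace ℝ (Fin 3)) 1 |
        0 < ⟪(φ : EuclideanSpace ℝ (Fin 3)), (l : EuclideanSpace ℝ (Fin 3))⟫} :=
      (isOpen_lt continuous_const
        (continuous_const.inner continuous_subtype_val)).measurableSet
    rw [← integral_indicator hS]
    set gfun : sphere (0 : EuclideanSpace ℝ (Fin 3)) 1 → ℝ :=
      fun l => ((1 / Real.pi) * ⟪(ψ : EuclideanSpace ℝ (Fin 3)), (l : EuclideanSpace ℝ (Fin 3))⟫ *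
        heaviside ⟪(ψ : EuclideanSpace ℝ (Fin 3)), (l : EuclideanSpace ℝ (Fin 3))⟫) *
        heaviside ⟪(φ : EuclideanSpace ℝ (Fin 3)), (l : EuclideanSpace ℝ (Fin 3))⟫ with hgfun
    have hind : Set.indicator {l : sphere (0 : EuclideanSpace ℝ (Fin 3)) 1 |
          0 < ⟪(φ : EuclideanSpace ℝ (Fin 3)), (l : EuclideanSpace ℝ (Fin 3))⟫}
        (fun l => (1 / Real.pi) * ⟪(ψ : EuclideanSpace ℝ (Fin 3)), (l : EuclideanSpace ℝ (Fin 3))⟫ *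
          heaviside ⟪(ψ : EuclideanSpace ℝ (Fin 3)), (l : EuclideanSpace ℝ (Fin 3))⟫) = gfun := by
      funext l
      by_cases h : 0 < ⟪(φ : EuclideanSpace ℝ (Fin 3)), (l : EuclideanSpace ℝ (Fin 3))⟫
      · have hm : l ∈ {l : sphere (0 : EuclideanSpace ℝ (Fin 3)) 1 |
            0 < ⟪(φ : EuclideanSpace ℝ (Fin 3)), (l : EuclideanSpace ℝ (Fin 3))⟫} := h
        simp only [Set.indicator_of_mem hm, hgfun]
        conv_rhs => unfold heaviside
        rw [if_pos h, mul_one]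
        rfl
      · have hm : l ∉ {l : sphere (0 : EuclideanSpace ℝ (Fin 3)) 1 |
            0 < ⟪(φ : EuclideanSpace ℝ (Fin 3)), (l : EuclideanSpace ℝ (Fin 3))⟫} := h
        simp only [Set.indicator_of_notMem hm, hgfun]
        conv_rhs => unfold heaviside
        rw [if_neg h, mul_zero]
    rw [hind]
    set G : EuclideanSpace ℝ (Fin 3) → ℝ := fun x =>
      (((1 / Real.pi) * ⟪(ψ : EuclideanSpace ℝ (Fin 3)), x⟫ *
        heaviside ⟪(ψ : EuclideanSpace ℝ (Fin 3)), x⟫) *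
        heaviside ⟪(φ : EuclideanSpace ℝ (Fin 3)), x⟫) * KS.bI x with hGdef
    have hg : ∀ x : ({(0 : EuclideanSpace ℝ (Fin 3))}ᶜ : Set (EuclideanSpace ℝ (Fin 3))),
        G x = gfun ((homeomorphUnitSphereProd (EuclideanSpace ℝ (Fin 3)) x).1) *
          (if ‖(x : EuclideanSpace ℝ (Fin 3))‖ < 1 then ‖(x : EuclideanSpace ℝ (Fin 3))‖ else 0) := by
      intro x
      have hx0 : (x : EuclideanSpace ℝ (Fin 3)) ≠ 0 := x.2
      have hn : 0 < ‖(x : EuclideanSpace ℝ (Fin 3))‖ := norm_pos_iff.mpr hx0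
      have hcoe : ((homeomorphUnitSphereProd (EuclideanSpace ℝ (Fin 3)) x).1 :
          EuclideanSpace ℝ (Fin 3)) = ‖(x : EuclideanSpace ℝ (Fin 3))‖⁻¹ • (x : EuclideanSpace ℝ (Fin 3)) := by simp
      have hg1 : ⟪(ψ : EuclideanSpace ℝ (Fin 3)),
          ((homeomorphUnitSphereProd (EuclideanSpace ℝ (Fin 3)) x).1 : EuclideanSpace ℝ (Fin 3))⟫
          = ‖(x : EuclideanSpace ℝ (Fin 3))‖⁻¹ * ⟪(ψ : EuclideanSpace ℝ (Fin 3)), (x : EuclideanSpace ℝ (Fin 3))⟫ := by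
        rw [hcoe, real_inner_smul_right]
      have hg2 : ⟪(φ : EuclideanSpace ℝ (Fin 3)),
          ((homeomorphUnitSphereProd (EuclideanSpace ℝ (Fin 3)) x).1 : EuclideanSpace ℝ (Fin 3))⟫
          = ‖(x : EuclideanSpace ℝ (Fin 3))‖⁻¹ * ⟪(φ : EuclideanSpace ℝ (Fin 3)), (x : EuclideanSpace ℝ (Fin 3))⟫ := by
        rw [hcoe, real_inner_smul_right]
      simp only [hGdef, hgfun]
      rw [hg1, hg2, KS.heaviside_pos_mul (inv_pos.mpr hn), KS.heaviside_pos_mul (inv_pos.mpr hn)]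
      unfold KS.bI
      by_cases h : ‖(x : EuclideanSpace ℝ (Fin 3))‖ < 1
      · rw [if_pos h, if_pos h, mul_one]
        field_simp
      · rw [if_neg h, if_neg h, mul_zero, mul_zero]
    rw [KS.sphere_integral_eq gfun G hg]
    have hmeasψ : Measurable fun x : EuclideanSpace ℝ (Fin 3) =>
        ⟪(ψ : EuclideanSpace ℝ (Fin 3)), x⟫ := (KS.inner_cont _).measurable
    have hmeasφ : Measurable fun x : EuclideanSpace ℝ (Fin 3) =>
        ⟪(φ : EuclideanSpace ℝ (Fin 3)), x⟫ := (KS.inner_cont _).measurable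
    have hIf1 : Integrable fun x => (⟪(ψ : EuclideanSpace ℝ (Fin 3)), x⟫ *
        heaviside ⟪(φ : EuclideanSpace ℝ (Fin 3)), x⟫) * KS.bI x := by
      refine KS.integrable_mul_bI (hmeasψ.mul (KS.measurable_heaviside.comp hmeasφ)) (M := 1)
        (fun x hx => ?_)
      rw [abs_mul]
      exact mul_le_one₀ (KS.abs_inner_le_on_ball _ hψ x hx) (abs_nonneg _)
        (KS.abs_heaviside_le_one _)
    have hIf2 : Integrable fun x => (|⟪(ψ : EuclideanSpace ℝ (Fin 3)), x⟫| *
        heaviside ⟪(φ : EuclideanSpace ℝ (Fin 3)), x⟫) * KS.bI x := by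
      refine KS.integrable_mul_bI (hmeasψ.abs.mul (KS.measurable_heaviside.comp hmeasφ)) (M := 1)
        (fun x hx => ?_)
      rw [abs_mul, abs_abs]
      exact mul_le_one₀ (KS.abs_inner_le_on_ball _ hψ x hx) (abs_nonneg _)
        (KS.abs_heaviside_le_one _)
    have hGsplit : (∫ x, G x) = (1 / (2 * Real.pi)) *
        ((∫ x, (⟪(ψ : EuclideanSpace ℝ (Fin 3)), x⟫ *
          heaviside ⟪(φ : EuclideanSpace ℝ (Fin 3)), x⟫) * KS.bI x)
        + ∫ x, (|⟪(ψ : EuclideanSpace ℝ (Fin 3)), x⟫| *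
          heaviside ⟪(φ : EuclideanSpace ℝ (Fin 3)), x⟫) * KS.bI x) := by
      rw [← integral_add hIf1 hIf2, ← integral_const_mul]
      refine integral_congr_ae (Filter.Eventually.of_forall fun x => ?_)
      show G x = (1 / (2 * Real.pi)) *
        ((⟪(ψ : EuclideanSpace ℝ (Fin 3)), x⟫ * heaviside ⟪(φ : EuclideanSpace ℝ (Fin 3)), x⟫) * KS.bI x
        + (|⟪(ψ : EuclideanSpace ℝ (Fin 3)), x⟫| * heaviside ⟪(φ : EuclideanSpace ℝ (Fin 3)), x⟫) * KS.bI x)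
      simp only [hGdef]
      have ht := KS.mul_heaviside_eq ⟪(ψ : EuclideanSpace ℝ (Fin 3)), x⟫
      rw [show (1 / Real.pi) * ⟪(ψ : EuclideanSpace ℝ (Fin 3)), x⟫ *
          heaviside ⟪(ψ : EuclideanSpace ℝ (Fin 3)), x⟫
          = (1 / Real.pi) * (⟪(ψ : EuclideanSpace ℝ (Fin 3)), x⟫ *
            heaviside ⟪(ψ : EuclideanSpace ℝ (Fin 3)), x⟫) from by ring, ht]
      ring
    rw [hGsplit,
      KS.integral_inner_heaviside_bI (ψ : EuclideanSpace ℝ (Fin 3)) (φ : EuclideanSpace ℝ (Fin 3)) hψ hφ,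
      KS.integral_abs_inner_heaviside_bI (ψ : EuclideanSpace ℝ (Fin 3)) (φ : EuclideanSpace ℝ (Fin 3)) hψ hφ,
      ← hcos]
    have hπ : Real.pi ≠ 0 := Real.pi_ne_zero
    field_simp
    ring
  · rw [Real.cos_sq, show 2 * (θ / 2) = θ by ring]
    ring
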